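/- Let f : [0,1] → ℝ be continuous, and suppose its graph G = {(x, f(x)) : x ∈ [0,1]} is a self-similar set. Set λ = f(1) − f(0). Then there exists c ∈ (0, 1/2) such that for every closed interval [a,b] ⊆ [0,1] with a < b there exist s, t with a ≤ s < t ≤ b satisfying: (1) s ≤ (a+b)/2 ≤ t; (2) c·(b−a) ≤ t − s ≤ (b−a)/2; and (3) f(t) − f(s) = λ·(t − s). -/

import Mathlib

/-- The rotation of ℝ² by angle θ, given by the matrix ((cos θ, sin θ), (−sin θ, cos θ)). -/
noncomputable def rot (θ : ℝ) (v : ℝ × ℝ) : ℝ × ℝ :=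
  (v.1 * Real.cos θ + v.2 * Real.sin θ, -v.1 * Real.sin θ + v.2 * Real.cos θ)

/-- A (contracting) similitude of ℝ²: a map `S v = r • ρ_θ v + b` with `r ∈ (0,1)`. -/
def IsSimilitude (S : ℝ × ℝ → ℝ × ℝ) : Prop :=
  ∃ (r θ : ℝ) (b : ℝ × ℝ), r ∈ Set.Ioo (0 : ℝ) 1 ∧ ∀ v, S v = r • rot θ v + b

/-- A compact set `K ⊆ ℝ²` is self-similar if it is the union of its images under
finitely many (at least one) contracting similitudes. -/
def IsSelfSimilar (K : Set (ℝ × ℝ)) : Prop :=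
  IsCompact K ∧ ∃ (k : ℕ) (S : Fin k → ℝ × ℝ → ℝ × ℝ),
    0 < k ∧ (∀ i, IsSimilitude (S i)) ∧ K = ⋃ i, S i '' K


open Real Set


lemma exists_cos_nonpos {a γ : ℝ} (ha : 0 < Real.cos a) (h0 : 0 < γ) (hπ : γ ≤ π) :
    ∃ n : ℕ, Real.cos (a + n * γ) ≤ 0 := by
  classical
  have hπpos := Real.pi_pos
  have h2π : (0:ℝ) < 2 * π := by linarith
  set m : ℤ := ⌊(a + π / 2) / (2 * π)⌋ with hm
  set a' : ℝ := a - m * (2 * π) with ha'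
  have hfl : (m : ℝ) ≤ (a + π / 2) / (2 * π) := Int.floor_le _
  have hfl' : (a + π / 2) / (2 * π) < m + 1 := Int.lt_floor_add_one _
  have hlb : -(π / 2) ≤ a' := by
    have := (le_div_iff₀ h2π).mp hfl
    simp only [ha']; linarith
  have hub : a' < 2 * π - π / 2 := by
    have := (div_lt_iff₀ h2π).mp hfl'
    simp only [ha']; linarith
  have hcosa' : Real.cos a' = Real.cos a := Real.cos_sub_int_mul_two_pi a m
  have ha'lt : a' < π / 2 := by
    by_contra hcon
    push_neg at hcon
    have : Real.cos a' ≤ 0 :=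
      Real.cos_nonpos_of_pi_div_two_le_of_le hcon (by linarith)
    rw [hcosa'] at this; linarith
  have hex : ∃ n : ℕ, π / 2 ≤ a' + n * γ := by
    obtain ⟨n, hn⟩ := exists_nat_ge ((π / 2 - a') / γ)
    exact ⟨n, by have := (div_le_iff₀ h0).mp hn; linarith⟩
  set n₀ := Nat.find hex with hn₀
  have hspec : π / 2 ≤ a' + n₀ * γ := Nat.find_spec hex
  have hn₀pos : 0 < n₀ := by
    rcases Nat.eq_zero_or_pos n₀ with h | h
    · exfalso; rw [h] at hspec; push_cast at hspec; linarith
    · exact h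
  have hmin : ¬ (π / 2 ≤ a' + (n₀ - 1 : ℕ) * γ) := Nat.find_min hex (by omega)
  push_neg at hmin
  have hcast : ((n₀ - 1 : ℕ) : ℝ) = (n₀ : ℝ) - 1 := by
    have : (1:ℕ) ≤ n₀ := hn₀pos
    push_cast [Nat.cast_sub this]; ring
  rw [hcast] at hmin
  have hup : a' + n₀ * γ ≤ π + π / 2 := by nlinarith
  have hcos := Real.cos_nonpos_of_pi_div_two_le_of_le hspec hup
  refine ⟨n₀, ?_⟩
  have : a + n₀ * γ = (a' + n₀ * γ) + m * (2 * π) := by simp [ha']; ring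
  rw [this, Real.cos_add_int_mul_two_pi]
  exact hcos

lemma sin_zero_cos_one_of_forall_cos_pos {a β : ℝ}
    (h : ∀ n : ℕ, 0 < Real.cos (a + n * β)) :
    Real.sin β = 0 ∧ Real.cos β = 1 := by
  classical
  have hπpos := Real.pi_pos
  have h2π : (0:ℝ) < 2 * π := by linarith
  set m : ℤ := ⌊β / (2 * π)⌋ with hm
  set γ : ℝ := β - m * (2 * π) with hγ
  have hfl : (m : ℝ) ≤ β / (2 * π) := Int.floor_le _
  have hfl' : β / (2 * π) < m + 1 := Int.lt_floor_add_one _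
  have hγ0 : 0 ≤ γ := by
    have := (le_div_iff₀ h2π).mp hfl
    simp only [hγ]; linarith
  have hγ2π : γ < 2 * π := by
    have := (div_lt_iff₀ h2π).mp hfl'
    simp only [hγ]; linarith
  have hγeq : ∀ n : ℕ, Real.cos (a + n * γ) = Real.cos (a + n * β) := by
    intro n
    have : a + n * γ = (a + n * β) - (n * m : ℤ) * (2 * π) := by
      push_cast; simp only [hγ]; ring
    rw [this, Real.cos_sub_int_mul_two_pi]
  have ha : 0 < Real.cos a := by have := h 0; simpa using this
  rcases eq_or_lt_of_le hγ0 with hz | hγpos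
  · have hβ : β = m * (2 * π) := by simp only [hγ] at hz; linarith
    constructor
    · rw [hβ]
      have : (m : ℝ) * (2 * π) = (2 * m : ℤ) * π := by push_cast; ring
      rw [this, Real.sin_int_mul_pi]
    · rw [hβ, Real.cos_int_mul_two_pi]
  · exfalso
    rcases le_or_gt γ π with hle | hgt
    · obtain ⟨n, hn⟩ := exists_cos_nonpos ha hγpos hle
      rw [hγeq n] at hn
      exact absurd (h n) (not_lt.mpr hn)
    · set γ' : ℝ := 2 * π - γ with hγ'
      have hγ'pos : 0 < γ' := by simp only [hγ']; linarith
      have hγ'le : γ' ≤ π := by simp only [hγ']; linarith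
      have ha' : 0 < Real.cos (-a) := by rwa [Real.cos_neg]
      obtain ⟨n, hn⟩ := exists_cos_nonpos ha' hγ'pos hγ'le
      have : Real.cos (-a + n * γ') = Real.cos (a + n * γ) := by
        have h1 : -a + n * γ' = -(a + n * γ) + n * (2 * π) := by
          simp only [hγ']; ring
        rw [h1]
        have : -(a + n * γ) + (n:ℝ) * (2 * π) = -(a + n * γ) + ((n:ℤ)) * (2 * π) := by
          push_cast; ring
        rw [this, Real.cos_add_int_mul_two_pi, Real.cos_neg]
      rw [this, hγeq n] at hn
      exact absurd (h n) (not_lt.mpr hn)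

lemma rot_zero (v : ℝ × ℝ) : rot 0 v = v := by
  simp [rot]

lemma rot_rot (θ ψ : ℝ) (v : ℝ × ℝ) : rot θ (rot ψ v) = rot (θ + ψ) v := by
  simp only [rot, Real.cos_add, Real.sin_add, Prod.mk.injEq]
  constructor <;> ring

lemma rot_smul (θ c : ℝ) (v : ℝ × ℝ) : rot θ (c • v) = c • rot θ v := by
  simp only [rot, Prod.smul_def, smul_eq_mul, Prod.mk.injEq]
  constructor <;> ring

lemma rot_add (θ : ℝ) (v w : ℝ × ℝ) : rot θ (v + w) = rot θ v + rot θ w := by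
  simp only [rot, Prod.fst_add, Prod.snd_add, Prod.mk_add_mk, Prod.mk.injEq]
  constructor <;> ring

lemma rot_sub (θ : ℝ) (v w : ℝ × ℝ) : rot θ (v - w) = rot θ v - rot θ w := by
  simp only [rot, Prod.fst_sub, Prod.snd_sub, Prod.mk_sub_mk, Prod.mk.injEq]
  constructor <;> ring

lemma rot_eq_zero {θ : ℝ} {v : ℝ × ℝ} (h : rot θ v = 0) : v = 0 := by
  have h1 : v.1 * Real.cos θ + v.2 * Real.sin θ = 0 := congrArg Prod.fst h
  have h2 : -v.1 * Real.sin θ + v.2 * Real.cos θ = 0 := congrArg Prod.snd h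
  have hsc := Real.sin_sq_add_cos_sq θ
  have hv1 : v.1 = 0 := by
    linear_combination Real.cos θ * h1 - Real.sin θ * h2 - v.1 * hsc
  have hv2 : v.2 = 0 := by
    linear_combination Real.sin θ * h1 + Real.cos θ * h2 - v.2 * hsc
  exact Prod.ext hv1 hv2

lemma piece_struct (f : ℝ → ℝ) (hf : ContinuousOn f (Icc 0 1))
    (G : Set (ℝ × ℝ)) (hG : G = (fun x => (x, f x)) '' Icc (0:ℝ) 1)
    (S : ℝ × ℝ → ℝ × ℝ) (r θ : ℝ) (b : ℝ × ℝ) (hr0 : 0 < r) (hr1 : r < 1)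
    (hS : ∀ v, S v = r • rot θ v + b) (hSG : S '' G ⊆ G) :
    ∃ u v : ℝ, 0 ≤ u ∧ v ≤ 1 ∧ v - u = r ∧ f v - f u = (f 1 - f 0) * r ∧
      ∀ q ∈ S '' G, u ≤ q.1 ∧ q.1 ≤ v := by
  have hmemG : ∀ x ∈ Icc (0:ℝ) 1, (x, f x) ∈ G := by
    intro x hx; rw [hG]; exact ⟨x, hx, rfl⟩
  have hQ : ∀ q ∈ G, q.1 ∈ Icc (0:ℝ) 1 ∧ q.2 = f q.1 := by
    intro q hq; rw [hG] at hq; obtain ⟨x, hx, rfl⟩ := hq; exact ⟨hx, rfl⟩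
  set φ : ℝ → ℝ := fun x => (S (x, f x)).1 with hφdef
  have hkey : ∀ x ∈ Icc (0:ℝ) 1, S (x, f x) = (φ x, f (φ x)) ∧ φ x ∈ Icc (0:ℝ) 1 := by
    intro x hx
    have h1 : S (x, f x) ∈ G := hSG (Set.mem_image_of_mem S (hmemG x hx))
    obtain ⟨hmem, heq⟩ := hQ _ h1
    constructor
    · exact Prod.ext rfl heq
    · exact hmem
  have hSdiff : ∀ v w, S v - S w = r • rot θ (v - w) := by
    intro v w
    rw [hS v, hS w, add_sub_add_right_eq_sub, ← smul_sub, ← rot_sub]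
  have hφcont : ContinuousOn φ (Icc 0 1) := by
    have hφeq : φ = fun x => r * (x * Real.cos θ + f x * Real.sin θ) + b.1 := by
      funext x; simp [hφdef, hS, rot]
    rw [hφeq]
    exact (continuousOn_const.mul ((continuousOn_id.mul continuousOn_const).add
      (hf.mul continuousOn_const))).add continuousOn_const
  have hφinj : InjOn φ (Icc 0 1) := by
    intro x hx y hy hxy
    have h1 := (hkey x hx).1
    have h2 := (hkey y hy).1
    have : S (x, f x) = S (y, f y) := by rw [h1, h2, hxy]
    have hd : S (x, f x) - S (y, f y) = 0 := by rw [this, sub_self]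
    rw [hSdiff] at hd
    have : rot θ ((x, f x) - (y, f y)) = 0 := by
      have := smul_eq_zero.mp hd
      rcases this with h | h
      · exact absurd h (ne_of_gt hr0)
      · exact h
    have := sub_eq_zero.mp (rot_eq_zero this)
    exact congrArg Prod.fst this
  have hiter : ∀ n : ℕ, ∀ x ∈ Icc (0:ℝ) 1,
      S^[n] (x, f x) = (φ^[n] x, f (φ^[n] x)) ∧ φ^[n] x ∈ Icc (0:ℝ) 1 := by
    intro n
    induction n with
    | zero => intro x hx; simpa using hx
    | succ n ih =>
      intro x hx
      obtain ⟨h1, h2⟩ := ih x hx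
      rw [Function.iterate_succ_apply' S, Function.iterate_succ_apply' φ, h1]
      exact hkey _ h2
  have hiterdiff : ∀ n : ℕ, ∀ v w, S^[n] v - S^[n] w = (r ^ n) • rot (n * θ) (v - w) := by
    intro n
    induction n with
    | zero => intro v w; simp [rot_zero]
    | succ n ih =>
      intro v w
      have e1 : r * r ^ n = r ^ (n + 1) := by ring
      have e2 : θ + (n : ℝ) * θ = ((n + 1 : ℕ) : ℝ) * θ := by push_cast; ring
      rw [Function.iterate_succ_apply' S, Function.iterate_succ_apply' S,
        hSdiff, ih, rot_smul, rot_rot, smul_smul, e1, e2]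
  have h0m : (0:ℝ) ∈ Icc (0:ℝ) 1 := by norm_num
  have h1m : (1:ℝ) ∈ Icc (0:ℝ) 1 := by norm_num
  set lam := f 1 - f 0 with hlamdef
  have hchordn : ∀ n : ℕ,
      φ^[n] 1 - φ^[n] 0 = r ^ n * (Real.cos (n * θ) + lam * Real.sin (n * θ)) := by
    intro n
    have hd := hiterdiff n (1, f 1) (0, f 0)
    rw [(hiter n 1 h1m).1, (hiter n 0 h0m).1] at hd
    have := congrArg Prod.fst hd
    simpa [rot, hlamdef] using this
  set L := Real.sqrt (1 + lam ^ 2) with hLdef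
  have hL : 0 < L := Real.sqrt_pos.mpr (by positivity)
  have hbridge : ∀ x : ℝ, Real.cos x + lam * Real.sin x
      = L * Real.cos (Real.arctan lam - x) := by
    intro x
    rw [Real.cos_sub, Real.cos_arctan, Real.sin_arctan]
    rw [hLdef]
    have h1 : Real.sqrt (1 + lam ^ 2) ≠ 0 := ne_of_gt hL
    field_simp
  rcases ContinuousOn.strictMonoOn_of_injOn_Icc' (by norm_num : (0:ℝ) ≤ 1) hφcont hφinj
    with hmono | hanti
  · -- increasing case
    have hpos : ∀ n : ℕ, 0 < φ^[n] 1 - φ^[n] 0 := by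
      intro n
      induction n with
      | zero => simp
      | succ n ih =>
        rw [Function.iterate_succ_apply' φ, Function.iterate_succ_apply' φ]
        exact sub_pos.mpr (hmono (hiter n 0 h0m).2 (hiter n 1 h1m).2 (sub_pos.mp ih))
    have hcospos : ∀ n : ℕ, 0 < Real.cos (Real.arctan lam + n * (-θ)) := by
      intro n
      have h1 := hpos n
      rw [hchordn n, hbridge] at h1
      have h2 : 0 < r ^ n := pow_pos hr0 n
      have h3 : 0 < Real.cos (Real.arctan lam - n * θ) := by
        nlinarith [mul_pos h2 hL]
      have h4 : Real.arctan lam + n * (-θ) = Real.arctan lam - n * θ := by ring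
      rw [h4]; exact h3
    obtain ⟨hsin, hcos⟩ := sin_zero_cos_one_of_forall_cos_pos hcospos
    rw [Real.sin_neg, neg_eq_zero] at hsin
    rw [Real.cos_neg] at hcos
    have hrotid : ∀ v : ℝ × ℝ, rot θ v = v := by
      intro v; simp [rot, hsin, hcos]
    have hd := hSdiff (1, f 1) (0, f 0)
    rw [(hkey 1 h1m).1, (hkey 0 h0m).1, hrotid] at hd
    have hfst := congrArg Prod.fst hd
    have hsnd := congrArg Prod.snd hd
    simp only [Prod.fst_sub, Prod.snd_sub, Prod.smul_fst, Prod.smul_snd, smul_eq_mul] at hfst hsnd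
    refine ⟨φ 0, φ 1, (hkey 0 h0m).2.1, (hkey 1 h1m).2.2, by linarith [hfst], ?_, ?_⟩
    · rw [hlamdef]; linarith [hsnd]
    · rintro q ⟨w, hw, rfl⟩
      obtain ⟨x, hx, rfl⟩ : ∃ x ∈ Icc (0:ℝ) 1, (x, f x) = w := by
        obtain ⟨hm, he⟩ := hQ w hw
        exact ⟨w.1, hm, by rw [← he]⟩
      rw [(hkey x hx).1]
      exact ⟨hmono.monotoneOn h0m hx hx.1, hmono.monotoneOn hx h1m hx.2⟩
  · -- decreasing case
    have hsign : ∀ n : ℕ, 0 < (-1 : ℝ) ^ n * (φ^[n] 1 - φ^[n] 0) := by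
      intro n
      induction n with
      | zero => simp
      | succ n ih =>
        rw [Function.iterate_succ_apply' φ, Function.iterate_succ_apply' φ]
        rcases Nat.even_or_odd n with he | ho
        · have h1 : (-1 : ℝ) ^ n = 1 := he.neg_one_pow
          have h2 : (-1 : ℝ) ^ (n + 1) = -1 := (he.add_one).neg_one_pow
          rw [h1] at ih
          have h3 : φ^[n] 0 < φ^[n] 1 := by linarith
          have h4 := hanti (hiter n 0 h0m).2 (hiter n 1 h1m).2 h3
          rw [h2]; linarith
        · have h1 : (-1 : ℝ) ^ n = -1 := ho.neg_one_pow
          have h2 : (-1 : ℝ) ^ (n + 1) = 1 := (ho.add_one).neg_one_pow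
          rw [h1] at ih
          have h3 : φ^[n] 1 < φ^[n] 0 := by linarith
          have h4 := hanti (hiter n 1 h1m).2 (hiter n 0 h0m).2 h3
          rw [h2]; linarith
    have hcospos : ∀ n : ℕ, 0 < Real.cos (Real.arctan lam + n * (π - θ)) := by
      intro n
      have h1 := hsign n
      rw [hchordn n, hbridge] at h1
      have h2 : 0 < r ^ n := pow_pos hr0 n
      have h4 : Real.arctan lam + n * (π - θ) = (Real.arctan lam - n * θ) + n * π := by ring
      rw [h4, Real.cos_add_nat_mul_pi]
      rcases Nat.even_or_odd n with he | ho
      · have hp : (-1 : ℝ) ^ n = 1 := he.neg_one_pow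
        rw [hp] at h1 ⊢; nlinarith [mul_pos h2 hL]
      · have hp : (-1 : ℝ) ^ n = -1 := ho.neg_one_pow
        rw [hp] at h1 ⊢; nlinarith [mul_pos h2 hL]
    obtain ⟨hsin, hcos⟩ := sin_zero_cos_one_of_forall_cos_pos hcospos
    rw [Real.sin_pi_sub] at hsin
    rw [Real.cos_pi_sub] at hcos
    have hcos' : Real.cos θ = -1 := by linarith
    have hrotneg : ∀ v : ℝ × ℝ, rot θ v = -v := by
      intro v
      rw [Prod.ext_iff]
      constructor <;> (simp [rot, hsin, hcos']; try ring)
    have hd := hSdiff (1, f 1) (0, f 0)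
    rw [(hkey 1 h1m).1, (hkey 0 h0m).1, hrotneg] at hd
    have hfst := congrArg Prod.fst hd
    have hsnd := congrArg Prod.snd hd
    simp only [Prod.fst_sub, Prod.snd_sub, Prod.fst_neg, Prod.snd_neg,
      Prod.smul_fst, Prod.smul_snd, smul_eq_mul] at hfst hsnd
    refine ⟨φ 1, φ 0, (hkey 1 h1m).2.1, (hkey 0 h0m).2.2, by linarith [hfst], ?_, ?_⟩
    · rw [hlamdef]; linarith [hsnd]
    · rintro q ⟨w, hw, rfl⟩
      obtain ⟨x, hx, rfl⟩ : ∃ x ∈ Icc (0:ℝ) 1, (x, f x) = w := by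
        obtain ⟨hm, he⟩ := hQ w hw
        exact ⟨w.1, hm, by rw [← he]⟩
      rw [(hkey x hx).1]
      exact ⟨hanti.antitoneOn hx h1m hx.2, hanti.antitoneOn h0m hx hx.1⟩

theorem selfSimilar_graph_subinterval_with_mean_slope (f : ℝ → ℝ)
    (hf : ContinuousOn f (Set.Icc (0 : ℝ) 1))
    (G : Set (ℝ × ℝ)) (hG : G = (fun x => (x, f x)) '' Set.Icc (0 : ℝ) 1)
    (hss : IsSelfSimilar G)
    (lam : ℝ) (hlam : lam = f 1 - f 0) :
    ∃ c ∈ Set.Ioo (0 : ℝ) (1 / 2), ∀ a b : ℝ, 0 ≤ a → a < b → b ≤ 1 →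
      ∃ s t : ℝ, a ≤ s ∧ s < t ∧ t ≤ b ∧
        s ≤ (a + b) / 2 ∧ (a + b) / 2 ≤ t ∧
        c * (b - a) ≤ t - s ∧ t - s ≤ (b - a) / 2 ∧
        f t - f s = lam * (t - s) := by
  classical
  obtain ⟨hcmp, k, S, hk, hsim, hunion⟩ := hss
  choose rr th bb hIoo hSv using hsim
  haveI : Nonempty (Fin k) := ⟨⟨0, hk⟩⟩
  have huniv : (Finset.univ : Finset (Fin k)).Nonempty := Finset.univ_nonempty
  set rmin : ℝ := Finset.univ.inf' huniv rr with hrmin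
  set rmax : ℝ := Finset.univ.sup' huniv rr with hrmax
  have hrmin_le : ∀ i, rmin ≤ rr i := fun i => Finset.inf'_le rr (Finset.mem_univ i)
  have hle_rmax : ∀ i, rr i ≤ rmax := fun i => Finset.le_sup' rr (Finset.mem_univ i)
  have hrmin_pos : 0 < rmin := by
    rw [hrmin, Finset.lt_inf'_iff]
    exact fun i _ => (hIoo i).1
  have hrmax_lt : rmax < 1 := by
    rw [hrmax, Finset.sup'_lt_iff]
    exact fun i _ => (hIoo i).2
  have hrmax_pos : 0 < rmax := lt_of_lt_of_le ((hIoo ⟨0, hk⟩).1) (hle_rmax _)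
  have hrmin_lt : rmin < 1 := lt_of_le_of_lt (le_trans (hrmin_le ⟨0, hk⟩) (hle_rmax _)) hrmax_lt
  refine ⟨rmin / 2, ⟨by linarith, by linarith⟩, ?_⟩
  intro a b ha hab hb
  set ε : ℝ := (b - a) / 2 with hε
  set p : ℝ := (a + b) / 2 with hp
  have hεpos : 0 < ε := by rw [hε]; linarith
  have hεle : ε ≤ 1 := by rw [hε]; linarith
  have hpmem : p ∈ Icc (0:ℝ) 1 := ⟨by rw [hp]; linarith, by rw [hp]; linarith⟩
  have hpfG : (p, f p) ∈ G := by rw [hG]; exact ⟨p, hpmem, rfl⟩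
  -- Good predicate
  set Good : (ℝ × ℝ → ℝ × ℝ) → ℝ → Prop := fun T ρ =>
    (0 < ρ ∧ ρ < 1) ∧ (∃ ψ c₀, ∀ v, T v = ρ • rot ψ v + c₀) ∧
      T '' G ⊆ G ∧ (p, f p) ∈ T '' G with hGood
  -- child step
  have hchild : ∀ T ρ, Good T ρ → ∃ i, Good (T ∘ S i) (ρ * rr i) := by
    intro T ρ hT
    obtain ⟨⟨hρ0, hρ1⟩, ⟨ψ, c₀, hTv⟩, hTG, hpT⟩ := hT
    have himg : T '' G = ⋃ i, (T ∘ S i) '' G := by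
      conv_lhs => rw [hunion]
      rw [Set.image_iUnion]
      exact Set.iUnion_congr fun i => (Set.image_comp T (S i) G).symm
    have hpT' : (p, f p) ∈ ⋃ i, (T ∘ S i) '' G := by rw [← himg]; exact hpT
    obtain ⟨i, hi⟩ := Set.mem_iUnion.mp hpT'
    refine ⟨i, ⟨mul_pos hρ0 (hIoo i).1, by nlinarith [(hIoo i).1, (hIoo i).2]⟩,
      ⟨ψ + th i, ρ • rot ψ (bb i) + c₀, ?_⟩, ?_, hi⟩
    · intro v
      simp only [Function.comp_apply, hTv, hSv i]
      rw [rot_add, rot_smul, rot_rot, smul_add, smul_smul]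
      abel
    · rw [Set.image_comp]
      refine le_trans (Set.image_mono (f := T) ?_) hTG
      conv_rhs => rw [hunion]
      exact Set.subset_iUnion (fun j => S j '' G) i
  -- descent induction
  obtain ⟨n₀, hn₀⟩ : ∃ n : ℕ, rmax ^ n < rmin * ε :=
    exists_pow_lt_of_lt_one (mul_pos hrmin_pos hεpos) hrmax_lt
  have hdescent : ∀ m : ℕ, ∀ T ρ, Good T ρ → rmin * ε ≤ ρ → ρ ≤ rmax ^ (n₀ - m) →
      ∃ T' ρ', Good T' ρ' ∧ rmin * ε ≤ ρ' ∧ ρ' ≤ ε := by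
    intro m
    induction m with
    | zero =>
      intro T ρ hT hlow hup
      simp only [Nat.sub_zero] at hup
      exact absurd (lt_of_le_of_lt hup hn₀) (not_lt.mpr hlow)
    | succ m ih =>
      intro T ρ hT hlow hup
      by_cases hcase : ρ ≤ ε
      · exact ⟨T, ρ, hT, hlow, hcase⟩
      · push_neg at hcase
        obtain ⟨i, hGi⟩ := hchild T ρ hT
        refine ih (T ∘ S i) (ρ * rr i) hGi ?_ ?_
        · calc rmin * ε ≤ rr i * ε := by
                exact mul_le_mul_of_nonneg_right (hrmin_le i) hεpos.le
            _ ≤ rr i * ρ := by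
                exact mul_le_mul_of_nonneg_left hcase.le (hIoo i).1.le
            _ = ρ * rr i := mul_comm _ _
        · have h1 : ρ * rr i ≤ rmax ^ (n₀ - (m+1)) * rmax := by
            exact mul_le_mul hup (hle_rmax i) (hIoo i).1.le (pow_nonneg hrmax_pos.le _)
          have h2 : rmax ^ (n₀ - (m+1)) * rmax = rmax ^ (n₀ - (m+1) + 1) := by
            rw [pow_succ]
          have h3 : rmax ^ (n₀ - (m+1) + 1) ≤ rmax ^ (n₀ - m) := by
            apply pow_le_pow_of_le_one hrmax_pos.le hrmax_lt.le
            omega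
          linarith
  -- start
  have hpfstart : (p, f p) ∈ ⋃ i, S i '' G := by rw [← hunion]; exact hpfG
  obtain ⟨i₀, hi₀⟩ := Set.mem_iUnion.mp hpfstart
  have hstart : Good (S i₀) (rr i₀) := by
    refine ⟨⟨(hIoo i₀).1, (hIoo i₀).2⟩, ⟨th i₀, bb i₀, hSv i₀⟩, ?_, hi₀⟩
    conv_rhs => rw [hunion]
    exact Set.subset_iUnion (fun i => S i '' G) i₀
  have hstart_low : rmin * ε ≤ rr i₀ := by
    have h1 : rmin * ε ≤ rmin * 1 := mul_le_mul_of_nonneg_left hεle hrmin_pos.le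
    have h2 := hrmin_le i₀
    linarith
  have hstart_up : rr i₀ ≤ rmax ^ (n₀ - n₀) := by
    simp only [Nat.sub_self, pow_zero]
    exact (hIoo i₀).2.le
  obtain ⟨T, ρ, hTGood, hρlow, hρhigh⟩ :=
    hdescent n₀ (S i₀) (rr i₀) hstart hstart_low hstart_up
  obtain ⟨⟨hρ0, hρ1⟩, ⟨ψ, c₀, hTv⟩, hTG, hpT⟩ := hTGood
  obtain ⟨u, v, hu0, hv1, hvu, hfvu, hbound⟩ :=
    piece_struct f hf G hG T ρ ψ c₀ hρ0 hρ1 hTv hTG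
  have hpuv : u ≤ p ∧ p ≤ v := by
    have := hbound (p, f p) hpT
    simpa using this
  refine ⟨u, v, ?_, ?_, ?_, ?_, ?_, ?_, ?_, ?_⟩
  · -- a ≤ u
    have : p - ε = a := by rw [hp, hε]; try ring
    have huv : v - u = ρ := hvu
    nlinarith [hpuv.2, hρhigh]
  · linarith [hvu, hρ0]
  · have : p + ε = b := by rw [hp, hε]; try ring
    nlinarith [hpuv.1, hρhigh, hvu]
  · exact hpuv.1
  · exact hpuv.2
  · have : rmin / 2 * (b - a) = rmin * ε := by rw [hε]; try ring
    rw [this, hvu]; exact hρlow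
  · rw [hvu, hε]; exact hρhigh
  · rw [hvu, hfvu, hlam]; try ring
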